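/- (Regularity of the multi-obstacle feedback.) The multi-obstacle feedback μ is continuous on ℝ^p \ {q_1,…,q_N} and locally Lipschitz continuous on ℝ^p \ ({q_1,…,q_N} ∪ {0}). -/

import Mathlib

open scoped RealInnerProductSpace
open Classical

noncomputable def sc (c r : ℝ) : ℝ :=
  if r ≤ c then c ^ ((2:ℝ)/3) * r ^ ((1:ℝ)/3) else r

noncomputable def nuS (c : ℝ) {p : ℕ} (ξ : EuclideanSpace ℝ (Fin p)) :
    EuclideanSpace ℝ (Fin p) :=
  if ξ = 0 then 0 else (-(sc c ‖ξ‖)⁻¹) • ξ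

noncomputable def proj {p : ℕ} (z v : EuclideanSpace ℝ (Fin p)) :
    EuclideanSpace ℝ (Fin p) :=
  v - (⟪z, v⟫ / ‖z‖ ^ 2) • z

noncomputable def nuA (c : ℝ) {p : ℕ} (q ξ : EuclideanSpace ℝ (Fin p)) :
    EuclideanSpace ℝ (Fin p) :=
  proj (ξ - q) (nuS c ξ)

noncomputable def sigmaQ {p : ℕ} (q ξ : EuclideanSpace ℝ (Fin p)) : ℝ :=
  max 0 (min (⟪ξ, ξ - q⟫ + 1) 1)

noncomputable def alphaS {p : ℕ} (q : EuclideanSpace ℝ (Fin p)) (Δ lam : ℝ)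
    (ξ : EuclideanSpace ℝ (Fin p)) : ℝ :=
  max 0 (min ((‖ξ - q‖ - Δ * sigmaQ q ξ) / (lam - Δ)) 1)

noncomputable def alphaA {p : ℕ} (q : EuclideanSpace ℝ (Fin p)) (Δ lam : ℝ)
    (ξ : EuclideanSpace ℝ (Fin p)) : ℝ :=
  sigmaQ q ξ * (1 - alphaS q Δ lam ξ)

noncomputable def mu (c : ℝ) {p : ℕ} (q : EuclideanSpace ℝ (Fin p)) (Δ lam : ℝ)
    (ξ : EuclideanSpace ℝ (Fin p)) : EuclideanSpace ℝ (Fin p) :=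
  alphaS q Δ lam ξ • nuS c ξ + alphaA q Δ lam ξ • nuA c q ξ

noncomputable def muMulti (c : ℝ) {p N : ℕ} (q : Fin N → EuclideanSpace ℝ (Fin p))
    (Δ lam : Fin N → ℝ) (ξ : EuclideanSpace ℝ (Fin p)) : EuclideanSpace ℝ (Fin p) :=
  (∏ i, alphaS (q i) (Δ i) (lam i) ξ) • nuS c ξ
    + ∑ i, alphaA (q i) (Δ i) (lam i) ξ • nuA c (q i) ξ

/-! ### Auxiliary: a calculus of "locally Lipschitz at a point" -/

set_option linter.unusedSectionVars false

section LipAtCalc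

variable {E F G : Type*} [NormedAddCommGroup E] [NormedSpace ℝ E]
  [NormedAddCommGroup F] [NormedSpace ℝ F] [NormedAddCommGroup G] [NormedSpace ℝ G]

/-- Locally Lipschitz at a point. -/
def LipAt (f : E → F) (x : E) : Prop :=
  ∃ K : NNReal, ∃ t ∈ nhds x, LipschitzOnWith K f t

theorem LipAt.continuousAt {f : E → F} {x : E} (h : LipAt f x) : ContinuousAt f x := by
  obtain ⟨K, t, ht, hl⟩ := h
  exact hl.continuousOn.continuousAt ht

theorem lipAt_of_contDiffAt {f : E → F} {x : E} (h : ContDiffAt ℝ 1 f x) : LipAt f x :=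
  h.exists_lipschitzOnWith

theorem lipAt_of_lipschitzWith {f : E → F} {K : NNReal} (h : LipschitzWith K f) (x : E) :
    LipAt f x :=
  ⟨K, Set.univ, Filter.univ_mem, h.lipschitzOnWith⟩

theorem LipAt.comp {g : F → G} {f : E → F} {x : E} (hg : LipAt g (f x)) (hf : LipAt f x) :
    LipAt (fun y => g (f y)) x := by
  obtain ⟨Kg, s, hs, hgs⟩ := hg
  obtain ⟨Kf, t, ht, hft⟩ := hf
  have hc : ContinuousAt f x := LipAt.continuousAt ⟨Kf, t, ht, hft⟩
  refine ⟨Kg * Kf, t ∩ f ⁻¹' s, Filter.inter_mem ht (hc hs), ?_⟩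
  exact hgs.comp (hft.mono Set.inter_subset_left) fun y hy => hy.2

theorem LipAt.prod {f : E → F} {g : E → G} {x : E} (hf : LipAt f x) (hg : LipAt g x) :
    LipAt (fun y => (f y, g y)) x := by
  obtain ⟨Kf, s, hs, hfs⟩ := hf
  obtain ⟨Kg, t, ht, hgt⟩ := hg
  exact ⟨max Kf Kg, s ∩ t, Filter.inter_mem hs ht,
    (hfs.mono Set.inter_subset_left).prodMk (hgt.mono Set.inter_subset_right)⟩

theorem lipAt_const {c : F} {x : E} : LipAt (fun _ => c) x :=
  lipAt_of_lipschitzWith (LipschitzWith.const c) x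

theorem lipAt_id {x : E} : LipAt (fun y => y) x :=
  lipAt_of_lipschitzWith LipschitzWith.id x

theorem LipAt.smul {f : E → ℝ} {g : E → F} {x : E} (hf : LipAt f x) (hg : LipAt g x) :
    LipAt (fun y => f y • g y) x :=
  LipAt.comp (lipAt_of_contDiffAt (contDiff_smul.contDiffAt)) (hf.prod hg)

theorem LipAt.mul {f g : E → ℝ} {x : E} (hf : LipAt f x) (hg : LipAt g x) :
    LipAt (fun y => f y * g y) x := by
  simpa [smul_eq_mul] using hf.smul hg

theorem LipAt.add {f g : E → F} {x : E} (hf : LipAt f x) (hg : LipAt g x) :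
    LipAt (fun y => f y + g y) x :=
  LipAt.comp (lipAt_of_contDiffAt ((contDiff_fst.add contDiff_snd).contDiffAt)) (hf.prod hg)

theorem LipAt.sub {f g : E → F} {x : E} (hf : LipAt f x) (hg : LipAt g x) :
    LipAt (fun y => f y - g y) x :=
  LipAt.comp (lipAt_of_contDiffAt ((contDiff_fst.sub contDiff_snd).contDiffAt)) (hf.prod hg)

theorem LipAt.neg {f : E → F} {x : E} (hf : LipAt f x) : LipAt (fun y => -f y) x :=
  LipAt.comp (lipAt_of_contDiffAt (contDiff_neg.contDiffAt)) hf

theorem LipAt.max {f g : E → ℝ} {x : E} (hf : LipAt f x) (hg : LipAt g x) :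
    LipAt (fun y => max (f y) (g y)) x :=
  LipAt.comp (lipAt_of_lipschitzWith lipschitzWith_max _) (hf.prod hg)

theorem LipAt.min {f g : E → ℝ} {x : E} (hf : LipAt f x) (hg : LipAt g x) :
    LipAt (fun y => min (f y) (g y)) x :=
  LipAt.comp (lipAt_of_lipschitzWith lipschitzWith_min _) (hf.prod hg)

theorem LipAt.inv {f : E → ℝ} {x : E} (hf : LipAt f x) (h : f x ≠ 0) :
    LipAt (fun y => (f y)⁻¹) x :=
  LipAt.comp (lipAt_of_contDiffAt (contDiffAt_inv ℝ h)) hf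

theorem LipAt.inner' {H : Type*} [NormedAddCommGroup H] [InnerProductSpace ℝ H]
    {f g : E → H} {x : E} (hf : LipAt f x) (hg : LipAt g x) :
    LipAt (fun y => (⟪f y, g y⟫ : ℝ)) x :=
  LipAt.comp (lipAt_of_contDiffAt (contDiff_inner.contDiffAt)) (hf.prod hg)

theorem lipAt_finset_sum {ι : Type*} {s : Finset ι} {f : ι → E → F} {x : E}
    (h : ∀ i ∈ s, LipAt (f i) x) : LipAt (fun y => ∑ i ∈ s, f i y) x := by
  classical
  induction s using Finset.induction_on with
  | empty => simpa using (lipAt_const (c := (0 : F)) (x := x))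
  | @insert a s ha ih =>
    simp only [Finset.sum_insert ha]
    exact (h a (Finset.mem_insert_self a s)).add
      (ih fun i hi => h i (Finset.mem_insert_of_mem hi))

theorem lipAt_finset_prod {ι : Type*} {s : Finset ι} {f : ι → E → ℝ} {x : E}
    (h : ∀ i ∈ s, LipAt (f i) x) : LipAt (fun y => ∏ i ∈ s, f i y) x := by
  classical
  induction s using Finset.induction_on with
  | empty => simpa using (lipAt_const (c := (1 : ℝ)) (x := x))
  | @insert a s ha ih =>
    simp only [Finset.prod_insert ha]
    exact (h a (Finset.mem_insert_self a s)).mul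
      (ih fun i hi => h i (Finset.mem_insert_of_mem hi))

end LipAtCalc

/-! ### Auxiliary facts about `sc`, `nuS`, `nuA` -/

theorem sc_eq_max {c : ℝ} (hc : 0 < c) {r : ℝ} (hr : 0 ≤ r) :
    sc c r = max (c ^ ((2:ℝ)/3) * r ^ ((1:ℝ)/3)) r := by
  rcases hr.eq_or_lt with h | h
  · simp [sc, ← h, hc.le, Real.zero_rpow (by norm_num : ((1:ℝ)/3) ≠ 0)]
  · have hr3 : (0:ℝ) < r ^ ((1:ℝ)/3) := Real.rpow_pos_of_pos h _
    have key : r = r ^ ((2:ℝ)/3) * r ^ ((1:ℝ)/3) := by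
      rw [← Real.rpow_add h]; norm_num
    unfold sc
    split_ifs with hrc
    · rw [max_eq_left]
      nth_rewrite 1 [key]
      exact mul_le_mul_of_nonneg_right
        (Real.rpow_le_rpow h.le hrc (by norm_num)) hr3.le
    · push_neg at hrc
      rw [max_eq_right]
      nth_rewrite 2 [key]
      exact mul_le_mul_of_nonneg_right
        (Real.rpow_le_rpow hc.le hrc.le (by norm_num)) hr3.le

theorem sc_pos {c : ℝ} (hc : 0 < c) {r : ℝ} (hr : 0 < r) : 0 < sc c r := by
  rw [sc_eq_max hc hr.le]
  exact lt_of_lt_of_le hr (le_max_right _ _)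

section Euclid

variable {p : ℕ}

local notation "E" => EuclideanSpace ℝ (Fin p)

theorem nuS_eq (c : ℝ) (ξ : E) : nuS c ξ = (-(sc c ‖ξ‖)⁻¹) • ξ := by
  unfold nuS
  split_ifs with h
  · subst h; simp
  · rfl

theorem norm_nuS_le {c : ℝ} (hc : 0 < c) (ξ : E) :
    ‖nuS c ξ‖ ≤ (c ^ ((2:ℝ)/3))⁻¹ * ‖ξ‖ ^ ((2:ℝ)/3) := by
  rcases eq_or_ne ξ 0 with h | h
  · subst h
    simp [nuS, Real.zero_rpow (by norm_num : ((2:ℝ)/3) ≠ 0)]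
  · have hn : (0:ℝ) < ‖ξ‖ := norm_pos_iff.mpr h
    have hc3 : (0:ℝ) < c ^ ((2:ℝ)/3) := Real.rpow_pos_of_pos hc _
    have hr3 : (0:ℝ) < ‖ξ‖ ^ ((1:ℝ)/3) := Real.rpow_pos_of_pos hn _
    have hsc : 0 < sc c ‖ξ‖ := sc_pos hc hn
    have h1 : c ^ ((2:ℝ)/3) * ‖ξ‖ ^ ((1:ℝ)/3) ≤ sc c ‖ξ‖ := by
      rw [sc_eq_max hc hn.le]; exact le_max_left _ _
    rw [nuS_eq c ξ, norm_smul]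
    have habs : ‖(-(sc c ‖ξ‖)⁻¹)‖ = (sc c ‖ξ‖)⁻¹ := by
      rw [norm_neg, Real.norm_eq_abs, abs_of_pos (inv_pos.mpr hsc)]
    rw [habs, inv_mul_eq_div, div_le_iff₀ hsc]
    have e : (c ^ ((2:ℝ)/3))⁻¹ * ‖ξ‖ ^ ((2:ℝ)/3) * (c ^ ((2:ℝ)/3) * ‖ξ‖ ^ ((1:ℝ)/3))
        = ‖ξ‖ := by
      have e2 : ‖ξ‖ ^ ((2:ℝ)/3) * ‖ξ‖ ^ ((1:ℝ)/3) = ‖ξ‖ := by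
        rw [← Real.rpow_add hn]; norm_num
      field_simp
      linear_combination e2
    calc ‖ξ‖ = (c ^ ((2:ℝ)/3))⁻¹ * ‖ξ‖ ^ ((2:ℝ)/3) * (c ^ ((2:ℝ)/3) * ‖ξ‖ ^ ((1:ℝ)/3)) :=
          e.symm
      _ ≤ (c ^ ((2:ℝ)/3))⁻¹ * ‖ξ‖ ^ ((2:ℝ)/3) * sc c ‖ξ‖ :=
          mul_le_mul_of_nonneg_left h1 (by positivity)

theorem continuousAt_nuS_zero {c : ℝ} (hc : 0 < c) :
    ContinuousAt (nuS c (p := p)) 0 := by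
  have h0 : nuS c (0 : E) = 0 := by simp [nuS]
  rw [ContinuousAt, h0]
  apply squeeze_zero_norm (fun ξ => norm_nuS_le hc ξ)
  have h1 : ContinuousAt (fun r : ℝ => r ^ ((2:ℝ)/3)) 0 :=
    Real.continuousAt_rpow_const 0 _ (Or.inr (by norm_num))
  have hnorm0 : Filter.Tendsto (fun ξ : E => ‖ξ‖) (nhds 0) (nhds 0) := by
    simpa using continuous_norm.tendsto (0 : E)
  have h2 : Filter.Tendsto (fun ξ : E => ‖ξ‖ ^ ((2:ℝ)/3)) (nhds 0) (nhds 0) := by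
    have := Filter.Tendsto.comp h1 hnorm0
    simpa [Function.comp_def, Real.zero_rpow (by norm_num : ((2:ℝ)/3) ≠ 0)] using this
  simpa using h2.const_mul ((c ^ ((2:ℝ)/3))⁻¹)

theorem lipAt_nuS {c : ℝ} (hc : 0 < c) {ξ₀ : E} (h0 : ξ₀ ≠ 0) :
    LipAt (nuS c) ξ₀ := by
  have hn : (0:ℝ) < ‖ξ₀‖ := norm_pos_iff.mpr h0
  have hnormC : ContDiffAt ℝ 1 (fun ξ : E => ‖ξ‖) ξ₀ := contDiffAt_norm ℝ h0
  have hA : LipAt (fun ξ : E => c ^ ((2:ℝ)/3) * ‖ξ‖ ^ ((1:ℝ)/3)) ξ₀ :=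
    lipAt_of_contDiffAt (contDiffAt_const.mul
      ((Real.contDiffAt_rpow_const_of_ne hn.ne').comp ξ₀ hnormC))
  have hB : LipAt (fun ξ : E => ‖ξ‖) ξ₀ := lipAt_of_contDiffAt hnormC
  have hsc : LipAt (fun ξ : E => sc c ‖ξ‖) ξ₀ := by
    have he : (fun ξ : E => sc c ‖ξ‖)
        = fun ξ : E => max (c ^ ((2:ℝ)/3) * ‖ξ‖ ^ ((1:ℝ)/3)) ‖ξ‖ := by
      funext ξ; exact sc_eq_max hc (norm_nonneg ξ)
    rw [he]; exact hA.max hB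
  have hinv : LipAt (fun ξ : E => (sc c ‖ξ‖)⁻¹) ξ₀ := hsc.inv (sc_pos hc hn).ne'
  have he : (nuS c : E → E) = fun ξ => (-(sc c ‖ξ‖)⁻¹) • ξ := funext (nuS_eq c)
  rw [he]
  exact hinv.neg.smul lipAt_id

theorem continuousAt_nuS {c : ℝ} (hc : 0 < c) (ξ₀ : E) : ContinuousAt (nuS c) ξ₀ := by
  rcases eq_or_ne ξ₀ 0 with h | h
  · subst h; exact continuousAt_nuS_zero hc
  · exact (lipAt_nuS hc h).continuousAt

theorem continuous_sigmaQ (q : E) : Continuous (sigmaQ q) :=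
  continuous_const.max
    (((continuous_id.inner (continuous_id.sub continuous_const)).add
      continuous_const).min continuous_const)

theorem continuous_alphaS (q : E) (Δ lam : ℝ) : Continuous (alphaS q Δ lam) :=
  continuous_const.max
    ((((continuous_id.sub continuous_const).norm.sub
      (continuous_const.mul (continuous_sigmaQ q))).div_const _).min continuous_const)

theorem continuous_alphaA (q : E) (Δ lam : ℝ) : Continuous (alphaA q Δ lam) :=
  (continuous_sigmaQ q).mul (continuous_const.sub (continuous_alphaS q Δ lam))

theorem continuousAt_nuA {c : ℝ} (hc : 0 < c) {q ξ₀ : E} (h : ξ₀ ≠ q) :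
    ContinuousAt (nuA c q) ξ₀ := by
  have hz : ξ₀ - q ≠ 0 := sub_ne_zero.mpr h
  have hzc : ContinuousAt (fun ξ : E => ξ - q) ξ₀ :=
    (continuous_id.sub continuous_const).continuousAt
  have h1 : ContinuousAt (fun ξ : E => (⟪ξ - q, nuS c ξ⟫ : ℝ)) ξ₀ :=
    hzc.inner (continuousAt_nuS hc ξ₀)
  have h2 : ContinuousAt (fun ξ : E => (‖ξ - q‖ ^ 2 : ℝ)) ξ₀ :=
    ((continuous_id.sub continuous_const).norm.pow 2).continuousAt
  have hden : ‖ξ₀ - q‖ ^ 2 ≠ 0 := pow_ne_zero _ (norm_ne_zero_iff.mpr hz)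
  unfold nuA proj
  exact (continuousAt_nuS hc ξ₀).sub (((h1.div h2 hden).smul hzc))

theorem lipAt_muMulti {c : ℝ} (hc : 0 < c) {N : ℕ} (q : Fin N → E) (Δ lam : Fin N → ℝ)
    {ξ₀ : E} (h0 : ξ₀ ≠ 0) (hq : ∀ i, ξ₀ ≠ q i) :
    LipAt (fun ξ => muMulti c q Δ lam ξ) ξ₀ := by
  have hnuS := lipAt_nuS hc h0
  have hσ : ∀ i, LipAt (fun ξ : E => sigmaQ (q i) ξ) ξ₀ := fun i => by
    unfold sigmaQ
    exact lipAt_const.max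
      (((LipAt.inner' lipAt_id (lipAt_id.sub lipAt_const)).add lipAt_const).min lipAt_const)
  have hnq : ∀ i, LipAt (fun ξ : E => ‖ξ - q i‖) ξ₀ := fun i =>
    lipAt_of_contDiffAt ((contDiffAt_norm ℝ (sub_ne_zero.mpr (hq i))).comp ξ₀
      (contDiffAt_id.sub contDiffAt_const))
  have hαS : ∀ i, LipAt (fun ξ : E => alphaS (q i) (Δ i) (lam i) ξ) ξ₀ := fun i => by
    unfold alphaS
    have hdiv : LipAt
        (fun ξ : E => (‖ξ - q i‖ - Δ i * sigmaQ (q i) ξ) / (lam i - Δ i)) ξ₀ := by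
      simp only [div_eq_mul_inv]
      exact ((hnq i).sub (lipAt_const.mul (hσ i))).mul lipAt_const
    exact lipAt_const.max (hdiv.min lipAt_const)
  have hαA : ∀ i, LipAt (fun ξ : E => alphaA (q i) (Δ i) (lam i) ξ) ξ₀ := fun i => by
    unfold alphaA
    exact (hσ i).mul (lipAt_const.sub (hαS i))
  have hnuA : ∀ i, LipAt (fun ξ : E => nuA c (q i) ξ) ξ₀ := fun i => by
    unfold nuA proj
    have hz : LipAt (fun ξ : E => ξ - q i) ξ₀ := lipAt_id.sub lipAt_const
    have hzn : ξ₀ - q i ≠ 0 := sub_ne_zero.mpr (hq i)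
    have hden : LipAt (fun ξ : E => (‖ξ - q i‖ ^ 2 : ℝ)) ξ₀ := by
      have he : (fun ξ : E => (‖ξ - q i‖ ^ 2 : ℝ)) = fun ξ => ⟪ξ - q i, ξ - q i⟫ := by
        funext ξ; rw [real_inner_self_eq_norm_sq]
      rw [he]; exact hz.inner' hz
    have hdenne : ‖ξ₀ - q i‖ ^ 2 ≠ 0 := pow_ne_zero _ (norm_ne_zero_iff.mpr hzn)
    have hcoef : LipAt (fun ξ : E => (⟪ξ - q i, nuS c ξ⟫ : ℝ) / ‖ξ - q i‖ ^ 2) ξ₀ := by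
      simp only [div_eq_mul_inv]
      exact (hz.inner' hnuS).mul (hden.inv hdenne)
    exact hnuS.sub (hcoef.smul hz)
  unfold muMulti
  exact ((lipAt_finset_prod fun i _ => hαS i).smul hnuS).add
    (lipAt_finset_sum fun i _ => (hαA i).smul (hnuA i))

end Euclid

theorem stmt15 (p N : ℕ) (hp : 1 ≤ p) (c : ℝ) (hc : 0 < c)
    (q : Fin N → EuclideanSpace ℝ (Fin p)) (Δ lam : Fin N → ℝ)
    (hΔ : ∀ i, 0 < Δ i) (hlam : ∀ i, Δ i < lam i) :
    ContinuousOn (fun ξ => muMulti c q Δ lam ξ)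
      ((Set.range q)ᶜ : Set (EuclideanSpace ℝ (Fin p))) ∧
    (∀ ξ : EuclideanSpace ℝ (Fin p), (∀ i, ξ ≠ q i) → ξ ≠ 0 →
      ∃ K : NNReal, ∃ t ∈ nhds ξ, LipschitzOnWith K (fun ξ' => muMulti c q Δ lam ξ') t) := by
  constructor
  · intro ξ hξ
    have hq : ∀ i, ξ ≠ q i := fun i h => hξ ⟨i, h.symm⟩
    apply ContinuousAt.continuousWithinAt
    have : ContinuousAt (fun ξ' => muMulti c q Δ lam ξ') ξ := by
      unfold muMulti
      apply ContinuousAt.add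
      · exact ((continuous_finset_prod _ fun i _ =>
          continuous_alphaS (q i) (Δ i) (lam i)).continuousAt).smul (continuousAt_nuS hc ξ)
      · exact tendsto_finset_sum _ fun i _ =>
          ((continuous_alphaA (q i) (Δ i) (lam i)).continuousAt).smul
            (continuousAt_nuA hc (hq i))
    exact this
  · intro ξ hq h0
    exact lipAt_muMulti hc q Δ lam h0 hq
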